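/- Let λ be on the unit circle, and on H = ℓ²(ℕ²) ⊕ ℓ²(ℕ²) define S1 = S ⊗ 1, S2 = D[λ] ⊗ S (acting on ℓ²(ℕ²) ≅ ℓ²(ℕ) ⊗ ℓ²(ℕ)), V1 = diag(S1, S2), V2 = diag(S2, S1), and U = diag(conj(λ)·1, λ·1). Then V1, V2 are isometries, U is unitary, V1 and V2 commute with U, and V1* V2 = U* V2 V1*. -/

import Mathlib

open ContinuousLinearMap
open scoped ComplexConjugate

local notation "H" => lp (fun _ : Bool × ℕ × ℕ => ℂ) 2

lemma stmt12_single_apply' (i j : Bool × ℕ × ℕ) :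
    (lp.single 2 i (1:ℂ) : H) j = if j = i then 1 else 0 := by
  by_cases h : j = i
  · subst h; simp [lp.single_apply_self]
  · simp [lp.single_apply_ne _ _ _ h, h]

lemma stmt12_inner_single (i : Bool × ℕ × ℕ) (f : H) :
    @inner ℂ _ _ (lp.single 2 i (1:ℂ) : H) f = f i := by
  rw [lp.inner_single_left]
  simp

lemma stmt12_adj_apply (V : H →L[ℂ] H) (f : H) (i j : Bool × ℕ × ℕ) (c : ℂ)
    (h : V (lp.single 2 i (1:ℂ)) = c • lp.single 2 j (1:ℂ)) :
    adjoint V f i = conj c * f j := by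
  rw [← stmt12_inner_single i (adjoint V f), ContinuousLinearMap.adjoint_inner_right, h,
    inner_smul_left, stmt12_inner_single]

/-- On `H = ℓ²(ℕ²) ⊕ ℓ²(ℕ²)` (modeled as `ℓ²(Bool × ℕ × ℕ)`, with `false` the first
summand), let `S1 = S ⊗ 1`, `S2 = D[λ] ⊗ S`, `V1 = diag(S1, S2)`, `V2 = diag(S2, S1)`,
`U = diag(conj λ · 1, λ · 1)`.  Then `V1, V2` are isometries, `U` is unitary, `V1, V2`
commute with `U`, and `V1* V2 = U* V2 V1*`. -/
theorem stmt_12 (lam : ℂ) (hlam : ‖lam‖ = 1)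
    (V1 V2 U : lp (fun _ : Bool × ℕ × ℕ => ℂ) 2 →L[ℂ] lp (fun _ : Bool × ℕ × ℕ => ℂ) 2)
    -- V1 acts as S1 = S ⊗ 1 on the first summand:
    (hV1f : ∀ f (p q : ℕ), V1 f (false, p, q) = if p = 0 then 0 else f (false, p - 1, q))
    -- and as S2 = D[λ] ⊗ S on the second summand:
    (hV1t : ∀ f (p q : ℕ),
      V1 f (true, p, q) = lam ^ p * (if q = 0 then 0 else f (true, p, q - 1)))
    -- V2 acts as S2 on the first summand and S1 on the second:
    (hV2f : ∀ f (p q : ℕ),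
      V2 f (false, p, q) = lam ^ p * (if q = 0 then 0 else f (false, p, q - 1)))
    (hV2t : ∀ f (p q : ℕ), V2 f (true, p, q) = if p = 0 then 0 else f (true, p - 1, q))
    -- U = diag(conj λ · 1, λ · 1):
    (hUf : ∀ f (p q : ℕ), U f (false, p, q) = (starRingEnd ℂ) lam * f (false, p, q))
    (hUt : ∀ f (p q : ℕ), U f (true, p, q) = lam * f (true, p, q)) :
    adjoint V1 * V1 = 1 ∧ adjoint V2 * V2 = 1 ∧
      U * adjoint U = 1 ∧ adjoint U * U = 1 ∧
      V1 * U = U * V1 ∧ V2 * U = U * V2 ∧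
      adjoint V1 * V2 = adjoint U * (V2 * adjoint V1) := by
  have hcl : conj lam * lam = 1 := by
    rw [Complex.conj_mul', hlam]; norm_num
  have hclp : ∀ n : ℕ, conj (lam ^ n) * lam ^ n = 1 := fun n => by
    rw [map_pow, ← mul_pow, hcl, one_pow]
  -- images of basis vectors
  have h1f : ∀ p q : ℕ, V1 (lp.single 2 (false, p, q) (1:ℂ)) =
      (1:ℂ) • lp.single 2 (false, p + 1, q) (1:ℂ) := by
    intro p q
    apply lp.ext; funext j; obtain ⟨b, p', q'⟩ := j
    rw [lp.coeFn_smul, Pi.smul_apply, smul_eq_mul, one_mul]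
    cases b
    · rw [hV1f]
      cases p' with
      | zero => simp [stmt12_single_apply']
      | succ n => simp [stmt12_single_apply', Pi.single_apply]
    · rw [hV1t]
      simp [stmt12_single_apply']
  have h1t : ∀ p q : ℕ, V1 (lp.single 2 (true, p, q) (1:ℂ)) =
      (lam ^ p) • lp.single 2 (true, p, q + 1) (1:ℂ) := by
    intro p q
    apply lp.ext; funext j; obtain ⟨b, p', q'⟩ := j
    rw [lp.coeFn_smul, Pi.smul_apply, smul_eq_mul]
    cases b
    · rw [hV1f]
      cases p' with
      | zero => simp [stmt12_single_apply']
      | succ n => simp [stmt12_single_apply']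
    · rw [hV1t]
      cases q' with
      | zero => simp [stmt12_single_apply']
      | succ n =>
        simp only [stmt12_single_apply', Nat.succ_ne_zero, if_false, Nat.add_sub_cancel,
          Prod.mk.injEq, Nat.succ.injEq, true_and]
        by_cases hp : p' = p
        · subst hp
          by_cases hn : n = q
          · subst hn; simp
          · simp [hn]
        · simp [hp]
  have h2f : ∀ p q : ℕ, V2 (lp.single 2 (false, p, q) (1:ℂ)) =
      (lam ^ p) • lp.single 2 (false, p, q + 1) (1:ℂ) := by
    intro p q
    apply lp.ext; funext j; obtain ⟨b, p', q'⟩ := j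
    rw [lp.coeFn_smul, Pi.smul_apply, smul_eq_mul]
    cases b
    · rw [hV2f]
      cases q' with
      | zero => simp [stmt12_single_apply']
      | succ n =>
        simp only [stmt12_single_apply', Nat.succ_ne_zero, if_false, Nat.add_sub_cancel,
          Prod.mk.injEq, Nat.succ.injEq, true_and]
        by_cases hp : p' = p
        · subst hp
          by_cases hn : n = q
          · subst hn; simp
          · simp [hn]
        · simp [hp]
    · rw [hV2t]
      cases p' with
      | zero => simp [stmt12_single_apply']
      | succ n => simp [stmt12_single_apply']
  have h2t : ∀ p q : ℕ, V2 (lp.single 2 (true, p, q) (1:ℂ)) =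
      (1:ℂ) • lp.single 2 (true, p + 1, q) (1:ℂ) := by
    intro p q
    apply lp.ext; funext j; obtain ⟨b, p', q'⟩ := j
    rw [lp.coeFn_smul, Pi.smul_apply, smul_eq_mul, one_mul]
    cases b
    · rw [hV2f]
      simp [stmt12_single_apply']
    · rw [hV2t]
      cases p' with
      | zero => simp [stmt12_single_apply']
      | succ n => simp [stmt12_single_apply', Pi.single_apply]
  have hUf1 : ∀ p q : ℕ, U (lp.single 2 (false, p, q) (1:ℂ)) =
      (conj lam) • lp.single 2 (false, p, q) (1:ℂ) := by
    intro p q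
    apply lp.ext; funext j; obtain ⟨b, p', q'⟩ := j
    rw [lp.coeFn_smul, Pi.smul_apply, smul_eq_mul]
    cases b
    · rw [hUf]
    · rw [hUt]; simp [stmt12_single_apply']
  have hUt1 : ∀ p q : ℕ, U (lp.single 2 (true, p, q) (1:ℂ)) =
      lam • lp.single 2 (true, p, q) (1:ℂ) := by
    intro p q
    apply lp.ext; funext j; obtain ⟨b, p', q'⟩ := j
    rw [lp.coeFn_smul, Pi.smul_apply, smul_eq_mul]
    cases b
    · rw [hUf]; simp [stmt12_single_apply']
    · rw [hUt]
  -- adjoint coordinate formulas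
  have a1f : ∀ (f : H) (p q : ℕ), adjoint V1 f (false, p, q) = f (false, p + 1, q) := by
    intro f p q
    simpa using stmt12_adj_apply V1 f _ _ 1 (h1f p q)
  have a1t : ∀ (f : H) (p q : ℕ),
      adjoint V1 f (true, p, q) = conj (lam ^ p) * f (true, p, q + 1) :=
    fun f p q => stmt12_adj_apply V1 f _ _ _ (h1t p q)
  have a2f : ∀ (f : H) (p q : ℕ),
      adjoint V2 f (false, p, q) = conj (lam ^ p) * f (false, p, q + 1) :=
    fun f p q => stmt12_adj_apply V2 f _ _ _ (h2f p q)
  have a2t : ∀ (f : H) (p q : ℕ), adjoint V2 f (true, p, q) = f (true, p + 1, q) := by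
    intro f p q
    simpa using stmt12_adj_apply V2 f _ _ 1 (h2t p q)
  have aUf : ∀ (f : H) (p q : ℕ), adjoint U f (false, p, q) = lam * f (false, p, q) := by
    intro f p q
    simpa using stmt12_adj_apply U f _ _ _ (hUf1 p q)
  have aUt : ∀ (f : H) (p q : ℕ), adjoint U f (true, p, q) = conj lam * f (true, p, q) :=
    fun f p q => stmt12_adj_apply U f _ _ _ (hUt1 p q)
  refine ⟨?_, ?_, ?_, ?_, ?_, ?_, ?_⟩
  · -- adjoint V1 * V1 = 1
    refine ContinuousLinearMap.ext fun f => lp.ext (funext fun x => ?_)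
    obtain ⟨b, p, q⟩ := x
    rw [ContinuousLinearMap.mul_apply, ContinuousLinearMap.one_apply]
    cases b
    · rw [a1f, hV1f]; simp
    · rw [a1t, hV1t, ← mul_assoc, map_pow, ← mul_pow, hcl, one_pow, one_mul]
      simp
  · refine ContinuousLinearMap.ext fun f => lp.ext (funext fun x => ?_)
    obtain ⟨b, p, q⟩ := x
    rw [ContinuousLinearMap.mul_apply, ContinuousLinearMap.one_apply]
    cases b
    · rw [a2f, hV2f, ← mul_assoc, map_pow, ← mul_pow, hcl, one_pow, one_mul]
      simp
    · rw [a2t, hV2t]; simp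
  · refine ContinuousLinearMap.ext fun f => lp.ext (funext fun x => ?_)
    obtain ⟨b, p, q⟩ := x
    rw [ContinuousLinearMap.mul_apply, ContinuousLinearMap.one_apply]
    cases b
    · rw [hUf, aUf, ← mul_assoc, hcl, one_mul]
    · rw [hUt, aUt, ← mul_assoc, mul_comm lam, hcl, one_mul]
  · refine ContinuousLinearMap.ext fun f => lp.ext (funext fun x => ?_)
    obtain ⟨b, p, q⟩ := x
    rw [ContinuousLinearMap.mul_apply, ContinuousLinearMap.one_apply]
    cases b
    · rw [aUf, hUf, ← mul_assoc, mul_comm lam, hcl, one_mul]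
    · rw [aUt, hUt, ← mul_assoc, hcl, one_mul]
  · refine ContinuousLinearMap.ext fun f => lp.ext (funext fun x => ?_)
    obtain ⟨b, p, q⟩ := x
    rw [ContinuousLinearMap.mul_apply, ContinuousLinearMap.mul_apply]
    cases b
    · rw [hV1f, hUf (V1 f) p q, hV1f]
      cases p with
      | zero => simp
      | succ n => simp [hUf]
    · rw [hV1t, hUt (V1 f) p q, hV1t]
      cases q with
      | zero => simp
      | succ n => simp [hUt]; ring
  · refine ContinuousLinearMap.ext fun f => lp.ext (funext fun x => ?_)
    obtain ⟨b, p, q⟩ := x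
    rw [ContinuousLinearMap.mul_apply, ContinuousLinearMap.mul_apply]
    cases b
    · rw [hV2f, hUf (V2 f) p q, hV2f]
      cases q with
      | zero => simp
      | succ n => simp [hUf]; ring
    · rw [hV2t, hUt (V2 f) p q, hV2t]
      cases p with
      | zero => simp
      | succ n => simp [hUt]
  · -- adjoint V1 * V2 = adjoint U * (V2 * adjoint V1)
    refine ContinuousLinearMap.ext fun f => lp.ext (funext fun x => ?_)
    obtain ⟨b, p, q⟩ := x
    rw [ContinuousLinearMap.mul_apply, ContinuousLinearMap.mul_apply,
      ContinuousLinearMap.mul_apply]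
    cases b
    · rw [a1f, hV2f, aUf, hV2f]
      cases q with
      | zero => simp
      | succ n =>
        simp only [Nat.succ_ne_zero, if_false, Nat.add_sub_cancel]
        rw [a1f]
        ring
    · rw [a1t, hV2t, aUt, hV2t]
      cases p with
      | zero => simp
      | succ n =>
        simp only [Nat.succ_ne_zero, if_false, Nat.add_sub_cancel]
        rw [a1t, map_pow, map_pow]
        ring
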